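/- Suppose for each vertex v_m of a polytope I = conv{v_1,…,v_M} there is an input sequence u^m = (u^m_0,…,u^m_{N-1}) with each u^m_i in a convex set U, satisfying a constraint system of the form ⟨G_j, x̄_t(v_m, u^m)⟩ + ∑_{i<t} c_{j,i} + ∑_{i<t} ∑_l w_{j,i,l} φ_l(‖F_l x̄_i(v_m,u^m)‖, ‖H_l u^m_i‖) ≤ g_j for all j, t, where x̄_t(x, u) = A^t x + ∑_{i<t} A^{t-1-i} B u_i, the c_{j,i} and w_{j,i,l} ≥ 0 are constants, and each φ_l is convex and non-decreasing in each argument. Then for every x ∈ I, writing x = ∑_m θ_m v_m as a convex combination, the convex-combination input sequence u_i = ∑_m θ_m u^m_i lies in U^N and satisfies the same constraint system with initial state x. -/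

import Mathlib

open Matrix Finset

/-- Nominal state after `t` steps of the discrete LTI system starting at `x₀`
with input sequence `u`. -/
noncomputable def nominalState {n m : ℕ} (A : Matrix (Fin n) (Fin n) ℝ)
    (B : Matrix (Fin n) (Fin m) ℝ) (t : ℕ) (x₀ : Fin n → ℝ)
    (u : ℕ → Fin m → ℝ) : Fin n → ℝ :=
  (A ^ t).mulVec x₀ + ∑ i ∈ range t, (A ^ (t - 1 - i)).mulVec (B.mulVec (u i))

lemma mulVec_sum' {n p M : ℕ} (A : Matrix (Fin n) (Fin p) ℝ) (f : Fin M → Fin p → ℝ) :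
    A.mulVec (∑ mm, f mm) = ∑ mm, A.mulVec (f mm) := by
  ext k
  simp only [Matrix.mulVec, dotProduct, Finset.sum_apply, Finset.mul_sum]
  exact Finset.sum_comm

lemma dotProduct_sum' {n M : ℕ} (g : Fin n → ℝ) (f : Fin M → Fin n → ℝ) :
    g ⬝ᵥ (∑ mm, f mm) = ∑ mm, g ⬝ᵥ f mm := by
  simp only [dotProduct, Finset.sum_apply, Finset.mul_sum]
  exact Finset.sum_comm

lemma nominal_lin {n m M : ℕ} (A : Matrix (Fin n) (Fin n) ℝ)
    (B : Matrix (Fin n) (Fin m) ℝ) (t : ℕ)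
    (θ : Fin M → ℝ) (v : Fin M → Fin n → ℝ) (u : Fin M → ℕ → Fin m → ℝ) :
    nominalState A B t (∑ mm, θ mm • v mm) (fun i => ∑ mm, θ mm • u mm i)
      = ∑ mm, θ mm • nominalState A B t (v mm) (u mm) := by
  have h2 : ∀ i : ℕ, (A ^ (t - 1 - i)).mulVec (B.mulVec (∑ mm, θ mm • u mm i))
      = ∑ mm, θ mm • (A ^ (t - 1 - i)).mulVec (B.mulVec (u mm i)) := by
    intro i
    rw [mulVec_sum', mulVec_sum']
    exact Finset.sum_congr rfl fun mm _ => by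
      rw [Matrix.mulVec_smul, Matrix.mulVec_smul]
  unfold nominalState
  rw [mulVec_sum']
  simp only [h2]
  rw [Finset.sum_comm]
  simp only [smul_add, Finset.sum_add_distrib, Finset.smul_sum]
  congr 1
  exact Finset.sum_congr rfl fun mm _ => by rw [Matrix.mulVec_smul]

/-- Core of Theorem 1 (recursive feasibility): if the tightened RMPC constraint
system is feasible at every vertex of the polytope `I = conv{v₁,…,v_M}` with
inputs in a convex set `U`, then for every convex combination `x = ∑ θₘ vₘ`,
the convex-combination input sequence is in `U` and satisfies the same
constraint system with initial state `x`. -/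
theorem rmpc_recursive_feasibility_core {E F' : Type*}
    [NormedAddCommGroup E] [NormedSpace ℝ E]
    [NormedAddCommGroup F'] [NormedSpace ℝ F']
    (n m N M ng nl : ℕ)
    (A : Matrix (Fin n) (Fin n) ℝ) (B : Matrix (Fin n) (Fin m) ℝ)
    (U : Set (Fin m → ℝ)) (hU : Convex ℝ U)
    (G : Fin ng → Fin n → ℝ) (g : Fin ng → ℝ)
    (c : Fin ng → ℕ → ℝ)
    (w : Fin ng → ℕ → Fin nl → ℝ) (hw : ∀ j i l, 0 ≤ w j i l)
    (φ : Fin nl → ℝ → ℝ → ℝ)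
    (hφconv : ∀ l, ConvexOn ℝ {p : ℝ × ℝ | 0 ≤ p.1 ∧ 0 ≤ p.2}
      (fun p => φ l p.1 p.2))
    (hφmono1 : ∀ l (b : ℝ), 0 ≤ b → MonotoneOn (fun a => φ l a b) (Set.Ici 0))
    (hφmono2 : ∀ l (a : ℝ), 0 ≤ a → MonotoneOn (fun b => φ l a b) (Set.Ici 0))
    (Fl : Fin nl → ((Fin n → ℝ) →ₗ[ℝ] E))
    (Hl : Fin nl → ((Fin m → ℝ) →ₗ[ℝ] F'))
    (v : Fin M → Fin n → ℝ) (u : Fin M → ℕ → Fin m → ℝ)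
    (huU : ∀ mm, ∀ i < N, u mm i ∈ U)
    (hfeas : ∀ mm, ∀ j, ∀ t ≤ N,
      G j ⬝ᵥ nominalState A B t (v mm) (u mm)
        + (∑ i ∈ range t, c j i)
        + ∑ i ∈ range t, ∑ l, w j i l *
            φ l ‖Fl l (nominalState A B i (v mm) (u mm))‖ ‖Hl l (u mm i)‖
      ≤ g j)
    (θ : Fin M → ℝ) (hθ : ∀ mm, 0 ≤ θ mm) (hθ1 : ∑ mm, θ mm = 1)
    (x : Fin n → ℝ) (hx : x = ∑ mm, θ mm • v mm) :
    (∀ i < N, (∑ mm, θ mm • u mm i) ∈ U) ∧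
    (∀ j, ∀ t ≤ N,
      G j ⬝ᵥ nominalState A B t x (fun i => ∑ mm, θ mm • u mm i)
        + (∑ i ∈ range t, c j i)
        + ∑ i ∈ range t, ∑ l, w j i l *
            φ l ‖Fl l (nominalState A B i x (fun i => ∑ mm, θ mm • u mm i))‖
                ‖Hl l (∑ mm, θ mm • u mm i)‖
      ≤ g j) := by
  subst hx
  constructor
  · intro i hi
    exact hU.sum_mem (fun mm _ => hθ mm) hθ1 (fun mm _ => huU mm i hi)
  · intro j t ht
    -- abbreviations
    set S : ℕ → Fin M → Fin n → ℝ := fun i mm => nominalState A B i (v mm) (u mm) with hS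
    have hstate : ∀ i : ℕ,
        nominalState A B i (∑ mm, θ mm • v mm) (fun i => ∑ mm, θ mm • u mm i)
          = ∑ mm, θ mm • S i mm := fun i => nominal_lin A B i θ v u
    simp only [hstate]
    -- Jensen-type bound for each i, l
    have hφle : ∀ i : ℕ, ∀ l : Fin nl,
        φ l ‖Fl l (∑ mm, θ mm • S i mm)‖ ‖Hl l (∑ mm, θ mm • u mm i)‖
          ≤ ∑ mm, θ mm * φ l ‖Fl l (S i mm)‖ ‖Hl l (u mm i)‖ := by
      intro i l
      set a : Fin M → ℝ := fun mm => ‖Fl l (S i mm)‖ with ha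
      set b : Fin M → ℝ := fun mm => ‖Hl l (u mm i)‖ with hb
      have hSA : (0:ℝ) ≤ ∑ mm, θ mm * a mm :=
        Finset.sum_nonneg fun mm _ => mul_nonneg (hθ mm) (norm_nonneg _)
      have hSB : (0:ℝ) ≤ ∑ mm, θ mm * b mm :=
        Finset.sum_nonneg fun mm _ => mul_nonneg (hθ mm) (norm_nonneg _)
      have hFa : ‖Fl l (∑ mm, θ mm • S i mm)‖ ≤ ∑ mm, θ mm * a mm := by
        rw [map_sum]
        refine (norm_sum_le _ _).trans_eq (Finset.sum_congr rfl fun mm _ => ?_)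
        rw [_root_.map_smul, norm_smul, Real.norm_eq_abs, abs_of_nonneg (hθ mm)]
      have hHb : ‖Hl l (∑ mm, θ mm • u mm i)‖ ≤ ∑ mm, θ mm * b mm := by
        rw [map_sum]
        refine (norm_sum_le _ _).trans_eq (Finset.sum_congr rfl fun mm _ => ?_)
        rw [_root_.map_smul, norm_smul, Real.norm_eq_abs, abs_of_nonneg (hθ mm)]
      have step1 : φ l ‖Fl l (∑ mm, θ mm • S i mm)‖ ‖Hl l (∑ mm, θ mm • u mm i)‖
          ≤ φ l (∑ mm, θ mm * a mm) ‖Hl l (∑ mm, θ mm • u mm i)‖ :=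
        hφmono1 l _ (norm_nonneg _) (Set.mem_Ici.2 (norm_nonneg _))
          (Set.mem_Ici.2 hSA) hFa
      have step2 : φ l (∑ mm, θ mm * a mm) ‖Hl l (∑ mm, θ mm • u mm i)‖
          ≤ φ l (∑ mm, θ mm * a mm) (∑ mm, θ mm * b mm) :=
        hφmono2 l _ hSA (Set.mem_Ici.2 (norm_nonneg _)) (Set.mem_Ici.2 hSB) hHb
      have hsum : (∑ mm, θ mm • (a mm, b mm))
          = ((∑ mm, θ mm * a mm, ∑ mm, θ mm * b mm) : ℝ × ℝ) := by
        apply Prod.ext <;> simp [Prod.fst_sum, Prod.snd_sum]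
      have jensen := (hφconv l).map_sum_le (t := Finset.univ) (w := θ)
        (p := fun mm => (a mm, b mm)) (fun mm _ => hθ mm) hθ1
        (fun mm _ => ⟨norm_nonneg _, norm_nonneg _⟩)
      rw [hsum] at jensen
      simp only [smul_eq_mul] at jensen
      exact (step1.trans step2).trans jensen
    have hdot : G j ⬝ᵥ (∑ mm, θ mm • S t mm) = ∑ mm, θ mm * (G j ⬝ᵥ S t mm) := by
      rw [dotProduct_sum']
      exact Finset.sum_congr rfl fun mm _ => by
        rw [dotProduct_smul, smul_eq_mul]
    calc G j ⬝ᵥ (∑ mm, θ mm • S t mm) + (∑ i ∈ range t, c j i)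
          + ∑ i ∈ range t, ∑ l, w j i l *
              φ l ‖Fl l (∑ mm, θ mm • S i mm)‖ ‖Hl l (∑ mm, θ mm • u mm i)‖
        ≤ (∑ mm, θ mm * (G j ⬝ᵥ S t mm)) + (∑ i ∈ range t, c j i)
          + ∑ i ∈ range t, ∑ l, w j i l *
              (∑ mm, θ mm * φ l ‖Fl l (S i mm)‖ ‖Hl l (u mm i)‖) := by
          rw [hdot]
          refine add_le_add_right (Finset.sum_le_sum fun i _ =>
            Finset.sum_le_sum fun l _ =>
              mul_le_mul_of_nonneg_left (hφle i l) (hw j i l)) _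
      _ = ∑ mm, θ mm * (G j ⬝ᵥ S t mm + (∑ i ∈ range t, c j i)
          + ∑ i ∈ range t, ∑ l, w j i l *
              φ l ‖Fl l (S i mm)‖ ‖Hl l (u mm i)‖) := by
          simp only [mul_add, Finset.sum_add_distrib]
          congr 1
          · congr 1
            rw [← Finset.sum_mul, hθ1, one_mul]
          · calc ∑ i ∈ range t, ∑ l, w j i l *
                  (∑ mm, θ mm * φ l ‖Fl l (S i mm)‖ ‖Hl l (u mm i)‖)
                = ∑ i ∈ range t, ∑ l, ∑ mm, θ mm *
                    (w j i l * φ l ‖Fl l (S i mm)‖ ‖Hl l (u mm i)‖) := by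
                  refine Finset.sum_congr rfl fun i _ =>
                    Finset.sum_congr rfl fun l _ => ?_
                  rw [Finset.mul_sum]
                  exact Finset.sum_congr rfl fun mm _ => by ring
              _ = ∑ i ∈ range t, ∑ mm, ∑ l, θ mm *
                    (w j i l * φ l ‖Fl l (S i mm)‖ ‖Hl l (u mm i)‖) :=
                  Finset.sum_congr rfl fun i _ => Finset.sum_comm
              _ = ∑ mm, ∑ i ∈ range t, ∑ l, θ mm *
                    (w j i l * φ l ‖Fl l (S i mm)‖ ‖Hl l (u mm i)‖) :=
                  Finset.sum_comm
              _ = ∑ mm, θ mm * ∑ i ∈ range t, ∑ l,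
                    w j i l * φ l ‖Fl l (S i mm)‖ ‖Hl l (u mm i)‖ := by
                  refine Finset.sum_congr rfl fun mm _ => ?_
                  rw [Finset.mul_sum]
                  exact Finset.sum_congr rfl fun i _ => by rw [Finset.mul_sum]
      _ ≤ ∑ mm, θ mm * g j :=
          Finset.sum_le_sum fun mm _ =>
            mul_le_mul_of_nonneg_left (hfeas mm j t ht) (hθ mm)
      _ = g j := by rw [← Finset.sum_mul, hθ1, one_mul]
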